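/- Let V be a quadratic space over ℚ and b₁,…,b_{2n} anisotropic vectors such that the product of reflections s_{b₁}∘⋯∘s_{b_{2n}} has spinor norm ±1 in ℚ^×/(ℚ^×)², i.e. ∏_{i=1}^{2n} q(b_i) = ±k² for some k ∈ ℚ^×. Then there exist vectors c₁,…,c_{2n} (each a scalar multiple of the corresponding b_i, hence in the same lattice if the b_i lie in a lattice) with s_{b₁}∘⋯∘s_{b_{2n}} = s_{c₁}∘⋯∘s_{c_{2n}} and ∏_{i=1}^{n} q(c_{2i−1}) = ± ∏_{i=1}^{n} q(c_{2i}). -/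

import Mathlib

/-- The reflection `s_v(x) = x − (x,v)·q(v)⁻¹·v` (with `q(v) = (v,v)/2`) in a rational
quadratic space with bilinear form `B`. -/
def reflQ {V : Type*} [AddCommGroup V] [Module ℚ V] (B : V →ₗ[ℚ] V →ₗ[ℚ] ℚ)
    (v : V) : V → V :=
  fun x => x - (B x v / (B v v / 2)) • v

/-- Composition of a list of maps (first element applied last). -/
def compList {V : Type*} (l : List (V → V)) : V → V :=
  l.foldr (· ∘ ·) id

lemma prod_even_odd {M : Type*} [CommMonoid M] (n : ℕ) (g : Fin (2 * n) → M) :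
    ∏ i, g i = (∏ i : Fin n, g ⟨2 * i.1, by omega⟩) * (∏ i : Fin n, g ⟨2 * i.1 + 1, by omega⟩) := by
  rw [← Equiv.prod_comp ((finProdFinEquiv (m := n) (n := 2)).trans (finCongr (mul_comm n 2))) g]
  rw [Fintype.prod_prod_type]
  rw [← Finset.prod_mul_distrib]
  apply Finset.prod_congr rfl
  intro i _
  rw [Fin.prod_univ_two]
  congr 1 <;> · apply congrArg; ext; simp; try omega

lemma reflQ_smul {V : Type*} [AddCommGroup V] [Module ℚ V] (B : V →ₗ[ℚ] V →ₗ[ℚ] ℚ)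
    (v : V) (l : ℚ) (hl : l ≠ 0) (hv : B v v ≠ 0) :
    reflQ B (l • v) = reflQ B v := by
  funext x
  unfold reflQ
  simp only [map_smul, LinearMap.smul_apply, smul_smul, smul_eq_mul]
  congr 2
  field_simp

/-- if `b₁, …, b_{2n}` are anisotropic vectors of a non-degenerate rational
quadratic space whose product of reflections has spinor norm `±1`
(i.e. `∏ q(bᵢ) = ±k²`), then there are rescalings `cᵢ = λᵢ·bᵢ` with the same product
of reflections and `∏_{i=1}^{n} q(c_{2i−1}) = ± ∏_{i=1}^{n} q(c_{2i})`. -/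
theorem stmt_5 (V : Type*) [AddCommGroup V] [Module ℚ V]
    (B : V →ₗ[ℚ] V →ₗ[ℚ] ℚ)
    (hsymm : ∀ x y, B x y = B y x)
    (hnondeg : ∀ x, (∀ y, B x y = 0) → x = 0)
    (n : ℕ) (b : Fin (2 * n) → V)
    (hb : ∀ i, B (b i) (b i) ≠ 0)
    (k : ℚ) (hk : k ≠ 0)
    (hspin : (∏ i, B (b i) (b i) / 2) = k ^ 2 ∨ (∏ i, B (b i) (b i) / 2) = -k ^ 2) :
    ∃ c : Fin (2 * n) → V,
      (∀ i, ∃ l : ℚ, l ≠ 0 ∧ c i = l • b i) ∧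
      compList (List.ofFn fun i => reflQ B (b i)) = compList (List.ofFn fun i => reflQ B (c i)) ∧
      ((∏ i : Fin n, B (c ⟨2 * i.1, by have := i.isLt; omega⟩) (c ⟨2 * i.1, by have := i.isLt; omega⟩) / 2)
          = (∏ i : Fin n, B (c ⟨2 * i.1 + 1, by have := i.isLt; omega⟩) (c ⟨2 * i.1 + 1, by have := i.isLt; omega⟩) / 2)
        ∨ (∏ i : Fin n, B (c ⟨2 * i.1, by have := i.isLt; omega⟩) (c ⟨2 * i.1, by have := i.isLt; omega⟩) / 2)
          = -(∏ i : Fin n, B (c ⟨2 * i.1 + 1, by have := i.isLt; omega⟩) (c ⟨2 * i.1 + 1, by have := i.isLt; omega⟩) / 2)) := by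
  rcases Nat.eq_zero_or_pos n with rfl | hn
  · exact ⟨b, fun i => ⟨1, one_ne_zero, (one_smul ℚ (b i)).symm⟩, rfl, Or.inl (by simp)⟩
  haveI : NeZero n := ⟨hn.ne'⟩
  set Po : ℚ := ∏ i : Fin n, B (b ⟨2 * i.1, by have := i.isLt; omega⟩) (b ⟨2 * i.1, by have := i.isLt; omega⟩) / 2 with hPo
  set Pe : ℚ := ∏ i : Fin n, B (b ⟨2 * i.1 + 1, by have := i.isLt; omega⟩) (b ⟨2 * i.1 + 1, by have := i.isLt; omega⟩) / 2 with hPe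
  have hPe0 : Pe ≠ 0 := Finset.prod_ne_zero_iff.2 fun i _ => div_ne_zero (hb _) two_ne_zero
  set lam : ℚ := Pe / k with hlamdef
  have hlam : lam ≠ 0 := div_ne_zero hPe0 hk
  have hPoPe : Po * Pe = k ^ 2 ∨ Po * Pe = -k ^ 2 := by
    rwa [prod_even_odd n (fun i => B (b i) (b i) / 2)] at hspin
  set c : Fin (2 * n) → V := fun i => if i.1 = 0 then lam • b i else b i with hcdef
  refine ⟨c, ?_, ?_, ?_⟩
  · intro i
    by_cases h : i.1 = 0
    · exact ⟨lam, hlam, by simp only [hcdef, h, ↓reduceIte]⟩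
    · exact ⟨1, one_ne_zero, by simp only [hcdef, h, ↓reduceIte, one_smul]⟩
  · apply congrArg; apply congrArg; funext i
    by_cases h : i.1 = 0
    · have : c i = lam • b i := by simp only [hcdef, h, ↓reduceIte]
      rw [this, reflQ_smul B (b i) lam hlam (hb i)]
    · have : c i = b i := by simp only [hcdef, h, ↓reduceIte]
      rw [this]
  · have hc : ∀ j : Fin (2 * n), B (c j) (c j) / 2
        = (if j.1 = 0 then lam ^ 2 else 1) * (B (b j) (b j) / 2) := by
      intro j
      by_cases h : j.1 = 0 <;> simp only [hcdef, h, ↓reduceIte, map_smul, LinearMap.smul_apply, smul_eq_mul] <;> ring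
    simp only [hc]
    rw [Finset.prod_mul_distrib, Finset.prod_mul_distrib]
    have he : ∀ i : Fin n, (if (2 * i.1 + 1) = 0 then lam ^ 2 else 1) = 1 := by
      intro i; simp
    have ho : (∏ i : Fin n, if (2 * i.1) = 0 then lam ^ 2 else 1) = lam ^ 2 := by
      rw [Finset.prod_congr rfl (fun i _ => ?_), Finset.prod_ite_eq' Finset.univ (0 : Fin n) (fun _ => lam ^ 2)]
      · simp
      · have hiff : 2 * i.1 = 0 ↔ i = (0 : Fin n) := by rw [← Fin.val_eq_zero_iff]; omega
        simp only [hiff]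
    simp only [he, ho, Finset.prod_const_one, one_mul]
    rw [← hPo, ← hPe, hlamdef]
    rcases hPoPe with h | h
    · left; field_simp; linear_combination h
    · right; field_simp; linear_combination h
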